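/- For any graph G, any vertices x, y, and any t ≥ 0, the number of independent sets of size t in G is at most the number of independent sets of size t in the compression G_{x→y}. -/

import Mathlib

open SimpleGraph Finset

/-- Number of cliques (complete vertex subsets, including the empty set) of `G`. -/
noncomputable def cliqueCount {V : Type*} (G : SimpleGraph V) : ℕ :=
  Nat.card {s : Finset V // G.IsClique (s : Set V)}

/-- Number of independent sets of `G` (cliques of the complement). -/
noncomputable def indepCount {V : Type*} (G : SimpleGraph V) : ℕ :=
  cliqueCount Gᶜ

/-- Number of independent sets of `G` of cardinality exactly `t`. -/
noncomputable def indepCountAt {V : Type*} (G : SimpleGraph V) (t : ℕ) : ℕ :=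
  Nat.card {s : Finset V // s.card = t ∧ Gᶜ.IsClique (s : Set V)}
/-- `v` is in `N_x`: adjacent to `x` but not to `y`, and outside `{x, y}`. -/
def NxSet {V : Type*} (G : SimpleGraph V) (x y v : V) : Prop :=
  v ≠ x ∧ v ≠ y ∧ G.Adj v x ∧ ¬ G.Adj v y

/-- The compression `G_{x→y}`: edges from `x` to `N_x` are removed and replaced by
edges from `y` to `N_x`; all other adjacencies are unchanged. -/
def compress {V : Type*} (G : SimpleGraph V) (x y : V) : SimpleGraph V where
  Adj a b := a ≠ b ∧ ((G.Adj a b ∧ ¬ ((NxSet G x y a ∧ b = x) ∨ (NxSet G x y b ∧ a = x))) ∨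
    (a = y ∧ NxSet G x y b) ∨ (b = y ∧ NxSet G x y a))
  symm := by
    constructor
    intro a b hab
    obtain ⟨hne, h⟩ := hab
    refine ⟨hne.symm, ?_⟩
    rw [G.adj_comm b a]
    tauto
  loopless := by constructor; intro a h; exact h.1 rfl

lemma indep_iff {V : Type*} (G : SimpleGraph V) (s : Finset V) :
    Gᶜ.IsClique (s : Set V) ↔ ∀ a ∈ s, ∀ b ∈ s, a ≠ b → ¬ G.Adj a b := by
  constructor
  · intro h a ha b hb hab hadj
    exact (h (Finset.mem_coe.2 ha) (Finset.mem_coe.2 hb) hab).2 hadj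
  · intro h a ha b hb hab
    exact ⟨hab, h a (Finset.mem_coe.1 ha) b (Finset.mem_coe.1 hb) hab⟩

lemma compress_adj {V : Type*} {G : SimpleGraph V} {x y a b : V} :
    (compress G x y).Adj a b ↔ a ≠ b ∧
      ((G.Adj a b ∧ ¬ ((NxSet G x y a ∧ b = x) ∨ (NxSet G x y b ∧ a = x))) ∨
        (a = y ∧ NxSet G x y b) ∨ (b = y ∧ NxSet G x y a)) := Iff.rfl

lemma exists_bad {V : Type*} {G : SimpleGraph V} {x y : V} (hxy : x ≠ y) {s : Finset V}
    (hs : Gᶜ.IsClique (s : Set V)) (hns : ¬ (compress G x y)ᶜ.IsClique (s : Set V)) :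
    y ∈ s ∧ x ∉ s ∧ ∃ v ∈ s, NxSet G x y v := by
  rw [indep_iff] at hs hns
  push_neg at hns
  obtain ⟨a, ha, b, hb, hab, hadj⟩ := hns
  rw [compress_adj] at hadj
  have hnadj : ¬ G.Adj a b := hs a ha b hb hab
  rcases hadj.2 with h | ⟨hay, hnb⟩ | ⟨hby, hna⟩
  · exact absurd h.1 hnadj
  · subst hay
    refine ⟨ha, fun hx => ?_, b, hb, hnb⟩
    exact hs b hb x hx hnb.1 hnb.2.2.1
  · subst hby
    refine ⟨hb, fun hx => ?_, a, ha, hna⟩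
    exact hs a ha x hx hna.1 hna.2.2.1

lemma swap_indep {V : Type*} [DecidableEq V] {G : SimpleGraph V} {x y : V} (hxy : x ≠ y)
    {s : Finset V} (hs : Gᶜ.IsClique (s : Set V))
    (hns : ¬ (compress G x y)ᶜ.IsClique (s : Set V)) :
    (compress G x y)ᶜ.IsClique ((insert x (s.erase y) : Finset V) : Set V) := by
  obtain ⟨hy, hx, v, hv, hnv⟩ := exists_bad hxy hs hns
  rw [indep_iff] at hs ⊢
  intro a ha b hb hab hadj
  rw [compress_adj] at hadj
  simp only [Finset.mem_insert, Finset.mem_erase] at ha hb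
  rcases ha with hax | ⟨hay, has⟩
  · rcases hb with hbx | ⟨hby, hbs⟩
    · exact hab (hax.trans hbx.symm)
    · -- a = x, b ∈ s, b ≠ y
      rw [hax] at hadj hab
      rcases hadj.2 with ⟨hGab, hnr⟩ | ⟨h1, _⟩ | ⟨h1, _⟩
      · have hnb : ¬ NxSet G x y b := fun hn => hnr (Or.inr ⟨hn, rfl⟩)
        have : G.Adj b y := by
          by_contra hby'
          exact hnb ⟨Ne.symm hab, hby, hGab.symm, hby'⟩
        exact hs b hbs y hy hby this
      · exact hxy h1
      · exact hby h1
  · rcases hb with hbx | ⟨hby, hbs⟩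
    · -- b = x, a ∈ s, a ≠ y
      rw [hbx] at hadj hab
      rcases hadj.2 with ⟨hGab, hnr⟩ | ⟨h1, _⟩ | ⟨h1, _⟩
      · have hna : ¬ NxSet G x y a := fun hn => hnr (Or.inl ⟨hn, rfl⟩)
        have : G.Adj a y := by
          by_contra hay'
          exact hna ⟨hab, hay, hGab, hay'⟩
        exact hs a has y hy hay this
      · exact hay h1
      · exact hxy h1
    · rcases hadj.2 with ⟨hGab, _⟩ | ⟨h1, _⟩ | ⟨h1, _⟩
      · exact hs a has b hbs hab hGab
      · exact hay h1
      · exact hby h1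

theorem aux_main {V : Type*} [Fintype V] (G : SimpleGraph V)
    (x y : V) (hxy : x ≠ y) (t : ℕ) :
    Nat.card {s : Finset V // s.card = t ∧ Gᶜ.IsClique (s : Set V)} ≤
    Nat.card {s : Finset V // s.card = t ∧ (compress G x y)ᶜ.IsClique (s : Set V)} := by
  classical
  have hf : ∀ p : {s : Finset V // s.card = t ∧ Gᶜ.IsClique (s : Set V)},
      ¬ (compress G x y)ᶜ.IsClique ((p : Finset V) : Set V) →
      (insert x ((p : Finset V).erase y)).card = t ∧
        (compress G x y)ᶜ.IsClique ((insert x ((p : Finset V).erase y) : Finset V) : Set V) := by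
    rintro ⟨s, hcard, hs⟩ hns
    obtain ⟨hy, hx, -⟩ := exists_bad hxy hs hns
    refine ⟨?_, swap_indep hxy hs hns⟩
    have hxe : x ∉ s.erase y := fun h => hx (Finset.mem_of_mem_erase h)
    rw [Finset.card_insert_of_notMem hxe, Finset.card_erase_of_mem hy]
    have : 0 < s.card := Finset.card_pos.2 ⟨y, hy⟩
    omega
  let f : {s : Finset V // s.card = t ∧ Gᶜ.IsClique (s : Set V)} →
      {s : Finset V // s.card = t ∧ (compress G x y)ᶜ.IsClique (s : Set V)} := fun p =>
    if h : (compress G x y)ᶜ.IsClique ((p : Finset V) : Set V) then ⟨p.1, p.2.1, h⟩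
    else ⟨insert x ((p : Finset V).erase y), hf p h⟩
  apply Nat.card_le_card_of_injective f
  rintro ⟨s, hsc, hs⟩ ⟨u, huc, hu⟩ h
  simp only [f] at h
  split_ifs at h with h1 h2 h2 <;>
    simp only [Subtype.mk.injEq] at h ⊢
  · exact h
  · -- s indep, u swapped : s = insert x (erase y u)
    exfalso
    obtain ⟨hyu, hxu, v, hv, hnv⟩ := exists_bad hxy hu h2
    have hxs : x ∈ s := h ▸ Finset.mem_insert_self x _
    have hvs : v ∈ s := by
      rw [h]; exact Finset.mem_insert_of_mem (Finset.mem_erase.2 ⟨hnv.2.1, hv⟩)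
    exact (indep_iff G s).1 hs v hvs x hxs hnv.1 hnv.2.2.1
  · exfalso
    obtain ⟨hys, hxs, v, hv, hnv⟩ := exists_bad hxy hs h1
    have hxu : x ∈ u := h.symm ▸ Finset.mem_insert_self x _
    have hvu : v ∈ u := by
      rw [← h]; exact Finset.mem_insert_of_mem (Finset.mem_erase.2 ⟨hnv.2.1, hv⟩)
    exact (indep_iff G u).1 hu v hvu x hxu hnv.1 hnv.2.2.1
  · obtain ⟨hys, hxs, -⟩ := exists_bad hxy hs h1
    obtain ⟨hyu, hxu, -⟩ := exists_bad hxy hu h2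
    have hxe : x ∉ s.erase y := fun hh => hxs (Finset.mem_of_mem_erase hh)
    have hxe' : x ∉ u.erase y := fun hh => hxu (Finset.mem_of_mem_erase hh)
    have he : s.erase y = u.erase y := by
      have := congrArg (fun w => Finset.erase w x) h
      simpa [Finset.erase_insert hxe, Finset.erase_insert hxe'] using this
    calc s = insert y (s.erase y) := (Finset.insert_erase hys).symm
      _ = insert y (u.erase y) := by rw [he]
      _ = u := Finset.insert_erase hyu

theorem indepCountAt_le_indepCountAt_compress {V : Type*} [Fintype V] (G : SimpleGraph V)
    (x y : V) (hxy : x ≠ y) (t : ℕ) :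
    indepCountAt G t ≤ indepCountAt (compress G x y) t := by
  unfold indepCountAt
  exact aux_main G x y hxy t
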